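/- Let V be a finite-dimensional complex inner product space and let H : ℝ → (self-adjoint operators on V) be continuously differentiable. Then for every θ ∈ ℝ and every t ∈ ℝ: (∂_θ e^{itH(θ)}) e^{−itH(θ)} = i ∫₀^t e^{iuH(θ)} (∂_θ H(θ)) e^{−iuH(θ)} du, and this also equals −e^{itH(θ)} (∂_θ e^{−itH(θ)}). -/

import Mathlib

open NormedSpace Complex Filter intervalIntegral MeasureTheory Topology
section helpers
variable {𝔸 : Type*} [NormedRing 𝔸] [NormedAlgebra ℂ 𝔸] [CompleteSpace 𝔸]

lemma hasDerivAt_exp_c (c : ℂ) (A : 𝔸) (u : ℝ) :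
    HasDerivAt (fun u : ℝ => NormedSpace.exp ((c * u) • A)) ((c • A) * NormedSpace.exp ((c * u) • A)) u := by
  have h1 : HasDerivAt (fun z : ℂ => NormedSpace.exp (z • (c • A)))
      ((c • A) * NormedSpace.exp (((u : ℂ)) • (c • A))) (u : ℂ) :=
    hasDerivAt_exp_smul_const' (c • A) (u : ℂ)
  have h2 := HasDerivAt.scomp (𝕜 := ℝ) u h1 Complex.ofRealCLM.hasDerivAt
  have key : ∀ v : ℝ, ((v : ℂ)) • (c • A) = (c * v) • A := by
    intro v; rw [smul_smul, mul_comm]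
  simpa [Function.comp_def, key, smul_mul_assoc] using h2

lemma continuous_exp_c (c : ℂ) (A : 𝔸) :
    Continuous (fun u : ℝ => NormedSpace.exp ((c * u) • A)) :=
  by letI : NormedAlgebra ℚ 𝔸 := NormedAlgebra.restrictScalars ℚ ℂ 𝔸; exact NormedSpace.exp_continuous.comp (by fun_prop)

lemma exp_c_mul_exp_c (c d : ℂ) (A : 𝔸) :
    NormedSpace.exp (c • A) * NormedSpace.exp (d • A) = NormedSpace.exp ((c + d) • A) := by
  letI : NormedAlgebra ℚ 𝔸 := NormedAlgebra.restrictScalars ℚ ℂ 𝔸; rw [add_smul, exp_add_of_commute (((Commute.refl A).smul_left c).smul_right d)]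

lemma norm_exp_le_exp_norm' [NormOneClass 𝔸] (x : 𝔸) : ‖NormedSpace.exp x‖ ≤ Real.exp ‖x‖ := by
  rw [exp_eq_tsum ℂ, Real.exp_eq_exp_ℝ, exp_eq_tsum ℝ]
  have hs : Summable (fun n : ℕ => (n.factorial : ℝ)⁻¹ • ‖x‖ ^ n) := by
    simpa [smul_eq_mul, div_eq_inv_mul] using Real.summable_pow_div_factorial ‖x‖
  have hb : ∀ n : ℕ, ‖(n.factorial : ℂ)⁻¹ • x ^ n‖ ≤ (n.factorial : ℝ)⁻¹ • ‖x‖ ^ n := by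
    intro n
    rw [norm_smul, smul_eq_mul, norm_inv, norm_natCast]
    gcongr
    exact norm_pow_le x n
  refine (norm_tsum_le_tsum_norm ?_).trans (Summable.tsum_le_tsum hb ?_ hs) <;>
    exact Summable.of_nonneg_of_le (fun n => norm_nonneg _) hb hs
end helpers

section main
variable {𝔸 : Type*} [NormedRing 𝔸] [NormedAlgebra ℂ 𝔸] [CompleteSpace 𝔸] [NormOneClass 𝔸]

lemma duhamel_key' (A B : 𝔸) (t : ℝ) :
    (∫ u in (0:ℝ)..t, NormedSpace.exp ((I*u) • A) * (I • (A - B)) * NormedSpace.exp ((-(I*u)) • B))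
      = NormedSpace.exp ((I*t) • A) * NormedSpace.exp ((-(I*t)) • B) - 1 := by
  have hK : ∀ u ∈ Set.uIcc (0:ℝ) t,
      HasDerivAt (fun u : ℝ => NormedSpace.exp ((I*u) • A) * NormedSpace.exp ((-(I*u)) • B))
        (NormedSpace.exp ((I*u) • A) * (I • (A - B)) * NormedSpace.exp ((-(I*u)) • B)) u := by
    intro u _
    have h1 := hasDerivAt_exp_c I A u
    have h2 : HasDerivAt (fun u : ℝ => NormedSpace.exp ((-(I*u)) • B))
        (((-I) • B) * NormedSpace.exp ((-(I*u)) • B)) u := by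
      simpa [neg_mul] using hasDerivAt_exp_c (-I) B u
    have h := HasDerivAt.mul (𝕜 := ℝ) (𝔸 := 𝔸) h1 h2
    have hcomm : NormedSpace.exp ((I*u) • A) * (I • A) = (I • A) * NormedSpace.exp ((I*u) • A) :=
      ((((Commute.refl A).smul_left (I*u)).smul_right I).exp_left).eq
    have halg : NormedSpace.exp ((I*u) • A) * (I • (A - B)) * NormedSpace.exp ((-(I*u)) • B)
        = (I • A) * NormedSpace.exp ((I*u) • A) * NormedSpace.exp ((-(I*u)) • B)
          + NormedSpace.exp ((I*u) • A) * (((-I) • B) * NormedSpace.exp ((-(I*u)) • B)) := by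
      rw [smul_sub, neg_smul, ← hcomm]
      noncomm_ring
      simp [smul_assoc]
    rw [halg]
    exact h
  have hint : IntervalIntegrable
      (fun u : ℝ => NormedSpace.exp ((I*u) • A) * (I • (A - B)) * NormedSpace.exp ((-(I*u)) • B))
      MeasureTheory.volume 0 t := by
    refine Continuous.intervalIntegrable ?_ _ _
    exact ((continuous_exp_c I A).mul continuous_const).mul
      (by simpa [neg_mul] using continuous_exp_c (-I) B)
  have := intervalIntegral.integral_eq_sub_of_hasDerivAt hK hint
  rw [this]
  simp [NormedSpace.exp_zero]

lemma duhamel_main (H H' : ℝ → 𝔸) (hH : ∀ θ : ℝ, HasDerivAt H (H' θ) θ) (θ t : ℝ) :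
    HasDerivAt (fun θ' => NormedSpace.exp ((I * t) • H θ'))
      ((I • ∫ u in (0:ℝ)..t, NormedSpace.exp ((I * u) • H θ) * H' θ * NormedSpace.exp ((-(I * u)) • H θ)) *
        NormedSpace.exp ((I * t) • H θ)) θ := by
  set E := NormedSpace.exp ((I * (t:ℂ)) • H θ) with hE
  rw [hasDerivAt_iff_tendsto_slope]
  have hslope : Tendsto (slope H θ) (𝓝[≠] θ) (𝓝 (H' θ)) :=
    hasDerivAt_iff_tendsto_slope.mp (hH θ)
  -- the difference quotient identity
  have heq : ∀ θ' : ℝ, θ' ≠ θ →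
      slope (fun θ'' => NormedSpace.exp ((I * t) • H θ'')) θ θ' =
        (∫ u in (0:ℝ)..t,
          NormedSpace.exp ((I * u) • H θ') * (I • slope H θ θ') * NormedSpace.exp ((-(I * u)) • H θ)) * E := by
    intro θ' hne
    have hinv : NormedSpace.exp ((-(I * t)) • H θ) * E = 1 := by
      rw [hE, exp_c_mul_exp_c]
      simp [NormedSpace.exp_zero]
    have hdiff : NormedSpace.exp ((I * t) • H θ') - NormedSpace.exp ((I * t) • H θ)
        = (∫ u in (0:ℝ)..t,
            NormedSpace.exp ((I * u) • H θ') * (I • (H θ' - H θ)) * NormedSpace.exp ((-(I * u)) • H θ)) * E := by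
      rw [duhamel_key' (H θ') (H θ) t, sub_mul, one_mul, mul_assoc, hinv, mul_one, hE]
    have hsub : θ' - θ ≠ 0 := sub_ne_zero.mpr hne
    rw [slope_def_module, hdiff, ← smul_mul_assoc]
    congr 1
    rw [← intervalIntegral.integral_smul]
    refine intervalIntegral.integral_congr (fun u _ => ?_)
    rw [slope_def_module]
    simp only [smul_mul_assoc, mul_smul_comm]
    rw [smul_comm]
  -- the limit of the parametrized integrals
  have hFcont : ∀ θ'' : ℝ, Continuous (fun u : ℝ =>
      NormedSpace.exp ((I * u) • H θ'') * (I • slope H θ θ'') * NormedSpace.exp ((-(I * u)) • H θ)) := by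
    intro θ''
    exact ((continuous_exp_c I (H θ'')).mul continuous_const).mul
      (by simpa [neg_mul] using continuous_exp_c (-I) (H θ))
  have hHb : ∀ᶠ θ' in 𝓝[≠] θ, ‖H θ'‖ ≤ ‖H θ‖ + 1 :=
    (((hH θ).continuousAt.norm.eventually (eventually_le_nhds (lt_add_one _))).filter_mono
      nhdsWithin_le_nhds)
  have hSb : ∀ᶠ θ' in 𝓝[≠] θ, ‖slope H θ θ'‖ ≤ ‖H' θ‖ + 1 :=
    hslope.norm.eventually (eventually_le_nhds (lt_add_one _))
  have habs : ∀ u : ℝ, u ∈ Set.uIoc (0:ℝ) t → |u| ≤ |t| := by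
    intro u hu
    rcases Set.mem_uIoc.mp hu with ⟨h1, h2⟩ | ⟨h1, h2⟩
    · rw [abs_of_pos h1]; exact h2.trans (le_abs_self t)
    · rw [abs_of_nonpos h2]
      have : -t ≤ |t| := neg_le_abs t
      linarith
  have hL : Tendsto (fun θ' => ∫ u in (0:ℝ)..t,
        NormedSpace.exp ((I * u) • H θ') * (I • slope H θ θ') * NormedSpace.exp ((-(I * u)) • H θ))
      (𝓝[≠] θ)
      (𝓝 (∫ u in (0:ℝ)..t,
        NormedSpace.exp ((I * u) • H θ) * (I • H' θ) * NormedSpace.exp ((-(I * u)) • H θ))) := by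
    refine intervalIntegral.tendsto_integral_filter_of_dominated_convergence
      (fun _ => Real.exp (|t| * (‖H θ‖ + 1)) * (‖H' θ‖ + 1) * Real.exp (|t| * ‖H θ‖))
      (Eventually.of_forall fun θ'' => (hFcont θ'').aestronglyMeasurable) ?_
      intervalIntegrable_const ?_
    · filter_upwards [hHb, hSb] with θ' hb1 hb2
      refine ae_of_all _ (fun u hu => ?_)
      have hu' : |u| ≤ |t| := habs u hu
      have n1 : ‖NormedSpace.exp ((I * u) • H θ')‖ ≤ Real.exp (|t| * (‖H θ‖ + 1)) := by
        refine (norm_exp_le_exp_norm' _).trans (Real.exp_le_exp.mpr ?_)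
        rw [norm_smul, norm_mul, Complex.norm_I, one_mul, Complex.norm_real, Real.norm_eq_abs]
        exact mul_le_mul hu' hb1 (norm_nonneg _) (abs_nonneg t)
      have n2 : ‖I • slope H θ θ'‖ ≤ ‖H' θ‖ + 1 := by
        rw [norm_smul, Complex.norm_I, one_mul]; exact hb2
      have n3 : ‖NormedSpace.exp ((-(I * u)) • H θ)‖ ≤ Real.exp (|t| * ‖H θ‖) := by
        refine (norm_exp_le_exp_norm' _).trans (Real.exp_le_exp.mpr ?_)
        rw [norm_smul, norm_neg, norm_mul, Complex.norm_I, one_mul, Complex.norm_real,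
          Real.norm_eq_abs]
        gcongr
      calc ‖NormedSpace.exp ((I * u) • H θ') * (I • slope H θ θ') * NormedSpace.exp ((-(I * u)) • H θ)‖
          ≤ ‖NormedSpace.exp ((I * u) • H θ') * (I • slope H θ θ')‖ * ‖NormedSpace.exp ((-(I * u)) • H θ)‖ :=
            norm_mul_le _ _
        _ ≤ (‖NormedSpace.exp ((I * u) • H θ')‖ * ‖I • slope H θ θ'‖) * ‖NormedSpace.exp ((-(I * u)) • H θ)‖ := by
            gcongr; exact norm_mul_le _ _
        _ ≤ Real.exp (|t| * (‖H θ‖ + 1)) * (‖H' θ‖ + 1) * Real.exp (|t| * ‖H θ‖) :=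
            mul_le_mul (mul_le_mul n1 n2 (norm_nonneg _) (Real.exp_pos _).le) n3
              (norm_nonneg _) (by positivity)
    · refine ae_of_all _ (fun u _ => ?_)
      have t1 : Tendsto (fun θ' => NormedSpace.exp ((I * u) • H θ')) (𝓝[≠] θ)
          (𝓝 (NormedSpace.exp ((I * u) • H θ))) := by
        have : ContinuousAt (fun θ' => NormedSpace.exp ((I * u) • H θ')) θ :=
          by letI : NormedAlgebra ℚ 𝔸 := NormedAlgebra.restrictScalars ℚ ℂ 𝔸; exact NormedSpace.exp_continuous.continuousAt.comp (((hH θ).continuousAt.const_smul (I * (u:ℂ))))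
        exact this.tendsto.mono_left nhdsWithin_le_nhds
      have t2 : Tendsto (fun θ' => I • slope H θ θ') (𝓝[≠] θ) (𝓝 (I • H' θ)) :=
        hslope.const_smul I
      exact (t1.mul t2).mul tendsto_const_nhds
  -- assemble
  have hlim := hL.mul (tendsto_const_nhds (x := E))
  have hfin : (∫ u in (0:ℝ)..t,
      NormedSpace.exp ((I * u) • H θ) * (I • H' θ) * NormedSpace.exp ((-(I * u)) • H θ)) * E
      = (I • ∫ u in (0:ℝ)..t,
          NormedSpace.exp ((I * u) • H θ) * H' θ * NormedSpace.exp ((-(I * u)) • H θ)) * E := by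
    congr 1
    rw [← intervalIntegral.integral_smul]
    refine intervalIntegral.integral_congr (fun u _ => ?_)
    simp only [mul_smul_comm, smul_mul_assoc]
  rw [← hfin]
  refine hlim.congr' ?_
  filter_upwards [self_mem_nhdsWithin] with θ' hθ'
  exact (heq θ' hθ').symm
end main

section flip
variable {𝔸 : Type*} [NormedRing 𝔸] [NormedAlgebra ℂ 𝔸] [CompleteSpace 𝔸]

lemma duhamel_flip (A B : 𝔸) (t : ℝ) :
    (I • ∫ u in (0:ℝ)..(-t), NormedSpace.exp ((I * u) • A) * B * NormedSpace.exp ((-(I * u)) • A)) *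
      NormedSpace.exp ((-(I * t)) • A)
    = -(NormedSpace.exp ((-(I * t)) • A) *
        (I • ∫ u in (0:ℝ)..t, NormedSpace.exp ((I * u) • A) * B * NormedSpace.exp ((-(I * u)) • A))) := by
  set g : ℝ → 𝔸 := fun u => NormedSpace.exp ((I * u) • A) * B * NormedSpace.exp ((-(I * u)) • A) with hg
  set E : 𝔸 := NormedSpace.exp ((-(I * t)) • A) with hE
  have hgcont : Continuous g :=
    ((continuous_exp_c I A).mul continuous_const).mul
      (by simpa [neg_mul] using continuous_exp_c (-I) A)
  have hpt : ∀ u : ℝ, g u * E = E * g (u + t) := by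
    intro u
    have c1 : (-(I * (u:ℂ))) + (-(I * (t:ℂ))) = -(I * ((u:ℂ) + (t:ℂ))) := by ring
    have c2 : (-(I * (t:ℂ))) + (I * ((u:ℂ) + (t:ℂ))) = I * (u:ℂ) := by ring
    have e1 : NormedSpace.exp ((-(I * (u:ℂ))) • A) * E = NormedSpace.exp ((-(I * ((u:ℂ) + t))) • A) := by
      rw [hE, exp_c_mul_exp_c, c1]
    have e2 : E * NormedSpace.exp ((I * ((u:ℂ) + t)) • A) = NormedSpace.exp ((I * (u:ℂ)) • A) := by
      rw [hE, exp_c_mul_exp_c, c2]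
    calc g u * E = NormedSpace.exp ((I * u) • A) * B * (NormedSpace.exp ((-(I * u)) • A) * E) := by
          rw [hg, mul_assoc]
      _ = NormedSpace.exp ((I * u) • A) * B * NormedSpace.exp ((-(I * ((u:ℂ) + t))) • A) := by rw [e1]
      _ = (E * NormedSpace.exp ((I * ((u:ℂ) + t)) • A)) * B * NormedSpace.exp ((-(I * ((u:ℂ) + t))) • A) := by
          rw [e2]
      _ = E * g (u + t) := by
          rw [hg]
          push_cast
          ring_nf
          noncomm_ring
  have hint1 : IntervalIntegrable g MeasureTheory.volume 0 (-t) :=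
    hgcont.intervalIntegrable _ _
  have hint2 : IntervalIntegrable (fun u => g (u + t)) MeasureTheory.volume 0 (-t) :=
    (hgcont.comp (by fun_prop)).intervalIntegrable _ _
  have step1 : (∫ u in (0:ℝ)..(-t), g u) * E = ∫ u in (0:ℝ)..(-t), g u * E := by
    have := ((ContinuousLinearMap.mul ℂ 𝔸).flip E).intervalIntegral_comp_comm hint1
    simpa using this.symm
  have step3 : (∫ u in (0:ℝ)..(-t), E * g (u + t)) = E * ∫ u in (0:ℝ)..(-t), g (u + t) := by
    have := (ContinuousLinearMap.mul ℂ 𝔸 E).intervalIntegral_comp_comm hint2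
    simpa using this
  have step4 : (∫ u in (0:ℝ)..(-t), g (u + t)) = -∫ u in (0:ℝ)..t, g u := by
    rw [intervalIntegral.integral_comp_add_right g t, zero_add, neg_add_cancel]
    exact intervalIntegral.integral_symm 0 t
  have step2 : (∫ u in (0:ℝ)..(-t), g u * E) = ∫ u in (0:ℝ)..(-t), E * g (u + t) :=
    intervalIntegral.integral_congr (fun u _ => hpt u)
  rw [smul_mul_assoc, step1, step2, step3, step4]
  rw [mul_neg, smul_neg, mul_smul_comm]
end flip

/-- Duhamel formula for the derivative of the operator exponential:
`(∂_θ e^{itH(θ)}) e^{-itH(θ)} = i ∫₀^t e^{iuH(θ)} (∂_θ H(θ)) e^{-iuH(θ)} du`, i.e.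
`∂_θ e^{itH(θ)} = (i ∫₀^t e^{iuH} H' e^{-iuH} du) e^{itH}`, and equivalently
`∂_θ e^{-itH(θ)} = -(e^{-itH} (i ∫₀^t e^{iuH} H' e^{-iuH} du))`. -/
theorem duhamel_derivative_of_exponential
    {V : Type*} [NormedAddCommGroup V] [InnerProductSpace ℂ V] [FiniteDimensional ℂ V]
    (H H' : ℝ → V →L[ℂ] V)
    (hsa : ∀ θ : ℝ, IsSelfAdjoint (H θ))
    (hH : ∀ θ : ℝ, HasDerivAt H (H' θ) θ)
    (hH'c : Continuous H') :
    ∀ θ t : ℝ,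
      HasDerivAt (fun θ' => NormedSpace.exp ((Complex.I * t) • H θ'))
        ((Complex.I • ∫ u in (0:ℝ)..t,
            NormedSpace.exp ((Complex.I * u) • H θ) * H' θ *
              NormedSpace.exp ((-(Complex.I * u)) • H θ)) *
          NormedSpace.exp ((Complex.I * t) • H θ)) θ ∧
      HasDerivAt (fun θ' => NormedSpace.exp ((-(Complex.I * t)) • H θ'))
        (-(NormedSpace.exp ((-(Complex.I * t)) • H θ) *
          (Complex.I • ∫ u in (0:ℝ)..t,
            NormedSpace.exp ((Complex.I * u) • H θ) * H' θ *
              NormedSpace.exp ((-(Complex.I * u)) • H θ)))) θ := by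
  intro θ t
  rcases subsingleton_or_nontrivial V with hV | hV
  · haveI : Subsingleton (V →L[ℂ] V) :=
      ⟨fun a b => ContinuousLinearMap.ext fun v => Subsingleton.elim _ _⟩
    have key : ∀ (g : ℝ → (V →L[ℂ] V)) (d : V →L[ℂ] V), HasDerivAt g d θ := by
      intro g d
      have hg : g = fun _ => 0 := funext fun x => Subsingleton.elim _ _
      rw [hg, Subsingleton.elim d (0 : V →L[ℂ] V)]
      exact hasDerivAt_const θ 0
    exact ⟨key _ _, key _ _⟩
  · refine ⟨duhamel_main H H' hH θ t, ?_⟩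
    have h2 := duhamel_main H H' hH θ (-t)
    simp only [Complex.ofReal_neg, mul_neg] at h2
    rwa [duhamel_flip (H θ) (H' θ) t] at h2
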